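/- Let X and Y be topological spaces and let c : X → Y be a (not necessarily continuous) correspondence. Define φ^c on closed subsets of X by φ^c(U) = closure of cU in Y, and φ_c on closed subsets of Y by φ_c(V) = closure of c^{[-1]}V in X. Then the following are equivalent: (i) for all closed U ⊆ X and closed V ⊆ Y, φ^c(U) ⊆ V if and only if U ⊆ φ_c(V) (that is, φ^c is a left adjoint to φ_c as functors between the categories of closed subsets with inclusions as morphisms); (ii) c is continuous, i.e., c^{[-1]}Z is closed in X for every closed Z ⊆ Y. -/
import Mathlib


/-- Let `X`, `Y` be topological spaces and `c : X → Set Y` a (not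
necessarily continuous) correspondence; write `cU = ⋃_{u ∈ U} c u` and
`c^{[-1]}V = {x | c x ⊆ V}`. Define `φ^c(U) = closure (cU)` for closed `U ⊆ X` and
`φ_c(V) = closure (c^{[-1]}V)` for closed `V ⊆ Y`. Then `φ^c` is a left adjoint to
`φ_c` (i.e. `φ^c(U) ⊆ V ↔ U ⊆ φ_c(V)` for all closed `U`, `V`) if and only if `c` is
continuous (i.e. `c^{[-1]}Z` is closed for every closed `Z ⊆ Y`). -/
theorem statement_13 {X Y : Type*} [TopologicalSpace X] [TopologicalSpace Y]
    (c : X → Set Y) :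
    (∀ U : Set X, IsClosed U → ∀ V : Set Y, IsClosed V →
      (closure (⋃ u ∈ U, c u) ⊆ V ↔ U ⊆ closure {x | c x ⊆ V})) ↔
    (∀ Z : Set Y, IsClosed Z → IsClosed {x | c x ⊆ Z}) := by
  constructor
  · intro h Z hZ
    have h2 := (h (closure {x | c x ⊆ Z}) isClosed_closure Z hZ).mpr subset_rfl
    have hsub : closure {x | c x ⊆ Z} ⊆ {x | c x ⊆ Z} := by
      intro x hx
      intro y hy
      exact (subset_closure.trans h2) (Set.mem_biUnion hx hy)
    exact isClosed_of_closure_subset hsub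
  · intro h U hU V hV
    have hcl : IsClosed {x | c x ⊆ V} := h V hV
    rw [hcl.closure_eq]
    constructor
    · intro hsub x hx y hy
      exact hsub (subset_closure (Set.mem_biUnion hx hy))
    · intro hsub
      rw [hV.closure_subset_iff]
      intro y hy
      rcases Set.mem_iUnion₂.mp hy with ⟨x, hx, hxy⟩
      exact hsub hx hxy
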